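/- Let k be an algebraically closed field of characteristic zero. Then sl(3, k) is a quotient of the Yang–Mills algebra ym(3); that is, there exists a surjective Lie algebra morphism φ from the free Lie algebra over k on generators x₁, x₂, x₃ onto sl(3, k) such that φ(r_j) = 0 for j = 1, 2, 3. -/

import Mathlib

open FreeLieAlgebra LieAlgebra.SpecialLinear

/-- The Yang–Mills relation `r j = ∑ i [xᵢ,[xᵢ,xⱼ]]` in the free Lie algebra on three
generators over `k`. -/
noncomputable def ymRel3 (k : Type*) [Field k] (j : Fin 3) : FreeLieAlgebra k (Fin 3) :=
  ∑ i : Fin 3, ⁅of k i, ⁅of k i, of k j⁆⁆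

/-- The images of the three generators: `x₁ ↦ E₂₁`, `x₂ ↦ E₃₂`, `x₃ ↦ E₁₃`. -/
noncomputable def ymX (k : Type*) [Field k] : Fin 3 → sl (Fin 3) k :=
  ![single (1 : Fin 3) 0 (by decide) (1 : k), single (2 : Fin 3) 1 (by decide) (1 : k),
    single (0 : Fin 3) 2 (by decide) (1 : k)]

lemma sl_coe_smul (k : Type*) [Field k] (c : k) (x : sl (Fin 3) k) :
    ((c • x : sl (Fin 3) k) : Matrix (Fin 3) (Fin 3) k) = c • (x : Matrix (Fin 3) (Fin 3) k) :=
  rfl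

lemma ymX_rel0 (k : Type*) [Field k] :
    ∑ i : Fin 3, ⁅ymX k i, ⁅ymX k i, ymX k 0⁆⁆ = 0 := by
  apply Subtype.ext
  show (_ : Matrix (Fin 3) (Fin 3) k) = _
  ext a b
  simp only [Fin.sum_univ_three, ymX]
  fin_cases a <;> fin_cases b <;>
    simp [LieSubalgebra.coe_bracket, Ring.lie_def, val_single, Matrix.mul_apply,
      Fin.sum_univ_three, Matrix.single]

lemma ymX_rel1 (k : Type*) [Field k] :
    ∑ i : Fin 3, ⁅ymX k i, ⁅ymX k i, ymX k 1⁆⁆ = 0 := by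
  apply Subtype.ext
  show (_ : Matrix (Fin 3) (Fin 3) k) = _
  ext a b
  simp only [Fin.sum_univ_three, ymX]
  fin_cases a <;> fin_cases b <;>
    simp [LieSubalgebra.coe_bracket, Ring.lie_def, val_single, Matrix.mul_apply,
      Fin.sum_univ_three, Matrix.single]

lemma ymX_rel2 (k : Type*) [Field k] :
    ∑ i : Fin 3, ⁅ymX k i, ⁅ymX k i, ymX k 2⁆⁆ = 0 := by
  apply Subtype.ext
  show (_ : Matrix (Fin 3) (Fin 3) k) = _
  ext a b
  simp only [Fin.sum_univ_three, ymX]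
  fin_cases a <;> fin_cases b <;>
    simp [LieSubalgebra.coe_bracket, Ring.lie_def, val_single, Matrix.mul_apply,
      Fin.sum_univ_three, Matrix.single]

lemma sl3_trace (k : Type*) [Field k] (v : sl (Fin 3) k) :
    v.val 0 0 + v.val 1 1 + v.val 2 2 = 0 := by
  have h : Matrix.trace v.val = 0 := v.2
  simpa [Matrix.trace, Matrix.diag, Fin.sum_univ_three] using h

set_option maxHeartbeats 1000000 in
/-- `sl(3,k)` is a quotient of the Yang–Mills algebra `ym(3)`: there is a surjective Lie
algebra morphism from the free Lie algebra on three generators onto `sl(3,k)` killing the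
Yang–Mills relations. -/
theorem sl3_quotient_of_ym3 (k : Type*) [Field k] [IsAlgClosed k] [CharZero k] :
    ∃ φ : FreeLieAlgebra k (Fin 3) →ₗ⁅k⁆ sl (Fin 3) k,
      Function.Surjective φ ∧ ∀ j : Fin 3, φ (ymRel3 k j) = 0 := by
  refine ⟨lift k (ymX k), ?_, ?_⟩
  · intro v
    refine ⟨(v.val 1 0) • of k (0 : Fin 3) + (v.val 2 1) • of k (1 : Fin 3)
      + (v.val 0 2) • of k (2 : Fin 3)
      + (v.val 2 0) • ⁅of k (1 : Fin 3), of k (0 : Fin 3)⁆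
      + (v.val 1 2) • ⁅of k (0 : Fin 3), of k (2 : Fin 3)⁆
      + (v.val 0 1) • ⁅of k (2 : Fin 3), of k (1 : Fin 3)⁆
      + (-(v.val 0 0)) • ⁅of k (0 : Fin 3), ⁅of k (2 : Fin 3), of k (1 : Fin 3)⁆⁆
      + (v.val 2 2) • ⁅of k (1 : Fin 3), ⁅of k (0 : Fin 3), of k (2 : Fin 3)⁆⁆, ?_⟩
    have htr := sl3_trace k v
    apply Subtype.ext
    show (_ : Matrix (Fin 3) (Fin 3) k) = _
    simp only [map_add, map_smul, LieHom.map_lie, lift_of_apply, ymX,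
      Matrix.cons_val_zero, Matrix.cons_val_one, Matrix.head_cons,
      Matrix.cons_val_two, Matrix.tail_cons, AddMemClass.coe_add, sl_coe_smul,
      LieSubalgebra.coe_bracket, Ring.lie_def, val_single]
    ext a b
    fin_cases a <;> fin_cases b <;>
      · simp [sl_coe_smul, LieSubalgebra.coe_bracket, Ring.lie_def, val_single,
          Matrix.add_apply, Matrix.smul_apply, Matrix.sub_apply, Matrix.mul_apply,
          Fin.sum_univ_three, Matrix.single]
        try linear_combination -htr
  · intro j
    rw [ymRel3, ← LieHom.coe_toLinearMap, map_sum]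
    simp only [LieHom.coe_toLinearMap, LieHom.map_lie, lift_of_apply]
    fin_cases j
    · exact ymX_rel0 k
    · exact ymX_rel1 k
    · exact ymX_rel2 k
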